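/- Let (Ω,F,P) be a probability space with filtration (F_n)_{n=1}^N and let (X_n), (Y_n), (W_n), n = 1,…,N, be integrable real-valued processes adapted to (F_n), with no ordering relation assumed among them. A randomized stopping strategy for player 1 is an adapted process p = (p_n)_{n=1}^N with values in [0,1] and p_N = 1; similarly q = (q_n)_{n=1}^N for player 2. Define the expected payoff R(p,q) = E[ Σ_{n=1}^N ( ∏_{k=1}^{n−1} (1−p_k)(1−q_k) ) · ( p_n(1−q_n) X_n + (1−p_n) q_n Y_n + p_n q_n W_n ) ]. Then there exist randomized stopping strategies p* and q* forming a saddle point: R(p,q*) ≤ R(p*,q*) ≤ R(p*,q) for all randomized stopping strategies p, q; in particular the zero-sum game has a value, sup_p inf_q R(p,q) = inf_q sup_p R(p,q). -/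

import Mathlib

open MeasureTheory

noncomputable section

/-- A randomized stopping strategy for the `N`-horizon game: an adapted `[0,1]`-valued
process `(p_n)_{n=1}^N` with `p_N = 1`; `p_n` is the conditional probability of
declaring to stop at time `n`. -/
def IsRandStrat {Ω : Type*} {m : MeasurableSpace Ω} (F : Filtration ℕ m) (N : ℕ)
    (p : ℕ → Ω → ℝ) : Prop :=
  (∀ n, 1 ≤ n → n ≤ N → Measurable[F n] (p n) ∧ ∀ ω, p n ω ∈ Set.Icc (0 : ℝ) 1) ∧
    ∀ ω, p N ω = 1

/-- The expected payoff of the randomized extension of the stopping game: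
`R(p,q) = E[Σ_{n=1}^N (Π_{k=1}^{n-1} (1-p_k)(1-q_k)) ·
(p_n(1-q_n) X_n + (1-p_n) q_n Y_n + p_n q_n W_n)]`. -/
def randPayoff {Ω : Type*} [MeasurableSpace Ω] (P : Measure Ω) (N : ℕ)
    (X Y W : ℕ → Ω → ℝ) (p q : ℕ → Ω → ℝ) : ℝ :=
  ∫ ω, ∑ n ∈ Finset.Icc 1 N,
      (∏ k ∈ Finset.Icc 1 (n - 1), (1 - p k ω) * (1 - q k ω)) *
        (p n ω * (1 - q n ω) * X n ω + (1 - p n ω) * q n ω * Y n ω +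
          p n ω * q n ω * W n ω) ∂P

namespace Yasuda

/-- Payoff of the one-shot 2x2 game: row player (prob `a` of stopping) gets `x` if he alone
stops, `y` if the column player alone stops, `w` if both stop, `v` (continuation) if none. -/
def phi (w x y v a b : ℝ) : ℝ :=
  a * (1 - b) * x + (1 - a) * b * y + a * b * w + (1 - a) * (1 - b) * v

/-- Optimal (mixed) stopping probability of the row player in the 2x2 game. -/
def sadA (w x y v : ℝ) : ℝ :=
  if y ≤ w ∧ w ≤ x then 1
  else if v ≤ x ∧ x ≤ w then 1
  else if w ≤ y ∧ y ≤ v then 0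
  else if x ≤ v ∧ v ≤ y then 0
  else (v - y) / (w - x - y + v)

/-- Optimal (mixed) stopping probability of the column player in the 2x2 game. -/
def sadB (w x y v : ℝ) : ℝ :=
  if y ≤ w ∧ w ≤ x then 1
  else if v ≤ x ∧ x ≤ w then 0
  else if w ≤ y ∧ y ≤ v then 1
  else if x ≤ v ∧ v ≤ y then 0
  else (v - x) / (w - x - y + v)

lemma sad_cases (w x y v : ℝ) (h1 : ¬(y ≤ w ∧ w ≤ x)) (h2 : ¬(v ≤ x ∧ x ≤ w))
    (h3 : ¬(w ≤ y ∧ y ≤ v)) (h4 : ¬(x ≤ v ∧ v ≤ y)) :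
    (x < w ∧ y < v ∧ y < w ∧ x < v) ∨ (w < x ∧ v < y ∧ w < y ∧ v < x) := by
  push_neg at h1 h2 h3 h4
  have k1 : x < w ∨ w < y := (le_or_gt y w).imp h1 id
  have k2 : w < x ∨ x < v := (le_or_gt v x).imp h2 id
  have k3 : v < y ∨ y < w := (le_or_gt w y).imp h3 id
  have k4 : y < v ∨ v < x := (le_or_gt x v).imp h4 id
  rcases k1 with k1 | k1 <;> rcases k2 with k2 | k2 <;> rcases k3 with k3 | k3 <;>
      rcases k4 with k4 | k4 <;>
    first
      | (left; exact ⟨by linarith, by linarith, by linarith, by linarith⟩)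
      | (right; exact ⟨by linarith, by linarith, by linarith, by linarith⟩)


lemma phi_mixed_b {w x y v : ℝ} (hD : w - x - y + v ≠ 0) (a : ℝ) :
    phi w x y v a ((v - x) / (w - x - y + v)) = (w * v - x * y) / (w - x - y + v) := by
  unfold phi; field_simp; ring

lemma phi_mixed_a {w x y v : ℝ} (hD : w - x - y + v ≠ 0) (b : ℝ) :
    phi w x y v ((v - y) / (w - x - y + v)) b = (w * v - x * y) / (w - x - y + v) := by
  unfold phi; field_simp; ring

lemma sad_spec (w x y v : ℝ) :
    sadA w x y v ∈ Set.Icc (0:ℝ) 1 ∧ sadB w x y v ∈ Set.Icc (0:ℝ) 1 ∧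
    ∀ a ∈ Set.Icc (0:ℝ) 1, ∀ b ∈ Set.Icc (0:ℝ) 1,
      phi w x y v a (sadB w x y v) ≤ phi w x y v (sadA w x y v) (sadB w x y v) ∧
      phi w x y v (sadA w x y v) (sadB w x y v) ≤ phi w x y v (sadA w x y v) b := by
  unfold sadA sadB
  split_ifs with h1 h2 h3 h4
  · refine ⟨⟨zero_le_one, le_refl 1⟩, ⟨zero_le_one, le_refl 1⟩, ?_⟩
    rintro a ⟨ha0, ha1⟩ b ⟨hb0, hb1⟩
    simp only [phi]
    constructor <;> nlinarith [mul_nonneg (sub_nonneg.mpr ha1) (sub_nonneg.mpr h1.1),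
      mul_nonneg (sub_nonneg.mpr hb1) (sub_nonneg.mpr h1.2),
      mul_nonneg hb0 (sub_nonneg.mpr h1.2), mul_nonneg ha0 (sub_nonneg.mpr h1.1)]
  · refine ⟨⟨zero_le_one, le_refl 1⟩, ⟨le_refl 0, zero_le_one⟩, ?_⟩
    rintro a ⟨ha0, ha1⟩ b ⟨hb0, hb1⟩
    simp only [phi]
    constructor <;> nlinarith [mul_nonneg (sub_nonneg.mpr ha1) (sub_nonneg.mpr h2.1),
      mul_nonneg hb0 (sub_nonneg.mpr h2.2), mul_nonneg (sub_nonneg.mpr hb1) (sub_nonneg.mpr h2.2),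
      mul_nonneg ha0 (sub_nonneg.mpr h2.1)]
  · refine ⟨⟨le_refl 0, zero_le_one⟩, ⟨zero_le_one, le_refl 1⟩, ?_⟩
    rintro a ⟨ha0, ha1⟩ b ⟨hb0, hb1⟩
    simp only [phi]
    constructor <;> nlinarith [mul_nonneg ha0 (sub_nonneg.mpr h3.1),
      mul_nonneg (sub_nonneg.mpr hb1) (sub_nonneg.mpr h3.2),
      mul_nonneg hb0 (sub_nonneg.mpr h3.2), mul_nonneg (sub_nonneg.mpr ha1) (sub_nonneg.mpr h3.1)]
  · refine ⟨⟨le_refl 0, zero_le_one⟩, ⟨le_refl 0, zero_le_one⟩, ?_⟩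
    rintro a ⟨ha0, ha1⟩ b ⟨hb0, hb1⟩
    simp only [phi]
    constructor <;> nlinarith [mul_nonneg ha0 (sub_nonneg.mpr h4.1),
      mul_nonneg hb0 (sub_nonneg.mpr h4.2), mul_nonneg (sub_nonneg.mpr hb1) (sub_nonneg.mpr h4.2),
      mul_nonneg (sub_nonneg.mpr ha1) (sub_nonneg.mpr h4.1)]
  · -- mixed case
    rcases sad_cases w x y v h1 h2 h3 h4 with ⟨c1, c2, c3, c4⟩ | ⟨c1, c2, c3, c4⟩
    · have hD : (0:ℝ) < w - x - y + v := by linarith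
      have hD' : w - x - y + v ≠ 0 := ne_of_gt hD
      have hA : (v - y) / (w - x - y + v) ∈ Set.Icc (0:ℝ) 1 := by
        constructor
        · exact div_nonneg (by linarith) hD.le
        · rw [div_le_one hD]; linarith
      have hB : (v - x) / (w - x - y + v) ∈ Set.Icc (0:ℝ) 1 := by
        constructor
        · exact div_nonneg (by linarith) hD.le
        · rw [div_le_one hD]; linarith
      refine ⟨hA, hB, ?_⟩
      rintro a ⟨ha0, ha1⟩ b ⟨hb0, hb1⟩
      exact ⟨le_of_eq ((phi_mixed_b hD' a).trans (phi_mixed_b hD' _).symm),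
        le_of_eq ((phi_mixed_a hD' _).trans (phi_mixed_a hD' b).symm)⟩
    · have hD : w - x - y + v < 0 := by linarith
      have hD' : w - x - y + v ≠ 0 := ne_of_lt hD
      have hA : (v - y) / (w - x - y + v) ∈ Set.Icc (0:ℝ) 1 := by
        constructor
        · exact le_of_lt (div_pos_of_neg_of_neg (by linarith) hD)
        · rw [div_le_iff_of_neg hD]; linarith
      have hB : (v - x) / (w - x - y + v) ∈ Set.Icc (0:ℝ) 1 := by
        constructor
        · exact le_of_lt (div_pos_of_neg_of_neg (by linarith) hD)
        · rw [div_le_iff_of_neg hD]; linarith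
      refine ⟨hA, hB, ?_⟩
      rintro a ⟨ha0, ha1⟩ b ⟨hb0, hb1⟩
      exact ⟨le_of_eq ((phi_mixed_b hD' a).trans (phi_mixed_b hD' _).symm),
        le_of_eq ((phi_mixed_a hD' _).trans (phi_mixed_a hD' b).symm)⟩


lemma phi_abs_le {w x y v a b : ℝ} (ha : a ∈ Set.Icc (0:ℝ) 1) (hb : b ∈ Set.Icc (0:ℝ) 1) :
    |phi w x y v a b| ≤ |x| + |y| + |w| + |v| := by
  obtain ⟨ha0, ha1⟩ := ha; obtain ⟨hb0, hb1⟩ := hb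
  have key : ∀ c t : ℝ, 0 ≤ c → c ≤ 1 → |c * t| ≤ |t| := by
    intro c t h0 h1
    rw [abs_mul, abs_of_nonneg h0]
    exact mul_le_of_le_one_left (abs_nonneg t) h1
  have h1 : |a * (1 - b) * x| ≤ |x| := key _ x (by nlinarith) (by nlinarith)
  have h2 : |(1 - a) * b * y| ≤ |y| := key _ y (by nlinarith) (by nlinarith)
  have h3 : |a * b * w| ≤ |w| := key _ w (by nlinarith) (by nlinarith)
  have h4 : |(1 - a) * (1 - b) * v| ≤ |v| := key _ v (by nlinarith) (by nlinarith)
  calc |phi w x y v a b| ≤ |a * (1 - b) * x| + |(1 - a) * b * y| + |a * b * w|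
        + |(1 - a) * (1 - b) * v| := by
        unfold phi
        exact (abs_add_three _ _ _).trans (by gcongr; exact abs_add_le _ _)
    _ ≤ |x| + |y| + |w| + |v| := by linarith

/-- The running (from time `n` on) payoff sum. -/
def Gval {Ω : Type*} (N : ℕ) (X Y W p q : ℕ → Ω → ℝ) (n : ℕ) (ω : Ω) : ℝ :=
  ∑ m ∈ Finset.Icc n N,
    (∏ k ∈ Finset.Icc n (m - 1), (1 - p k ω) * (1 - q k ω)) *
      (p m ω * (1 - q m ω) * X m ω + (1 - p m ω) * q m ω * Y m ω +
        p m ω * q m ω * W m ω)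

lemma Gval_rec {Ω : Type*} (N : ℕ) (X Y W p q : ℕ → Ω → ℝ) (n : ℕ) (hn1 : 1 ≤ n)
    (hnN : n ≤ N) (ω : Ω) :
    Gval N X Y W p q n ω =
      phi (W n ω) (X n ω) (Y n ω) (Gval N X Y W p q (n + 1) ω) (p n ω) (q n ω) := by
  unfold Gval phi
  have hins : Finset.Icc n N = insert n (Finset.Icc (n + 1) N) := by
    ext k
    simp only [Finset.mem_Icc, Finset.mem_insert]
    omega
  rw [hins, Finset.sum_insert (by simp)]
  have hself : Finset.Icc n (n - 1) = ∅ := by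
    apply Finset.Icc_eq_empty
    omega
  rw [hself, Finset.prod_empty, one_mul]
  have hprod : ∀ m ∈ Finset.Icc (n + 1) N,
      (∏ k ∈ Finset.Icc n (m - 1), (1 - p k ω) * (1 - q k ω)) *
        (p m ω * (1 - q m ω) * X m ω + (1 - p m ω) * q m ω * Y m ω +
          p m ω * q m ω * W m ω)
      = ((1 - p n ω) * (1 - q n ω)) *
        ((∏ k ∈ Finset.Icc (n + 1) (m - 1), (1 - p k ω) * (1 - q k ω)) *
        (p m ω * (1 - q m ω) * X m ω + (1 - p m ω) * q m ω * Y m ω +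
          p m ω * q m ω * W m ω)) := by
    intro m hm
    rw [Finset.mem_Icc] at hm
    have : Finset.Icc n (m - 1) = insert n (Finset.Icc (n + 1) (m - 1)) := by
      ext k
      simp only [Finset.mem_Icc, Finset.mem_insert]
      omega
    rw [this, Finset.prod_insert (by simp), mul_assoc]
  rw [Finset.sum_congr rfl hprod, ← Finset.mul_sum]
  try ring

lemma Gval_top {Ω : Type*} (N : ℕ) (X Y W p q : ℕ → Ω → ℝ) (ω : Ω) :
    Gval N X Y W p q (N + 1) ω = 0 := by
  unfold Gval
  rw [Finset.Icc_eq_empty (by omega), Finset.sum_empty]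


lemma measurable_sadA_comp {Ω : Type*} {m' : MeasurableSpace Ω} {f g h k : Ω → ℝ}
    (hf : Measurable[m'] f) (hg : Measurable[m'] g) (hh : Measurable[m'] h)
    (hk : Measurable[m'] k) :
    Measurable[m'] (fun ω => sadA (f ω) (g ω) (h ω) (k ω)) := by
  unfold sadA
  refine Measurable.ite ((measurableSet_le hh hf).inter (measurableSet_le hf hg)) measurable_const ?_
  refine Measurable.ite ((measurableSet_le hk hg).inter (measurableSet_le hg hf)) measurable_const ?_
  refine Measurable.ite ((measurableSet_le hf hh).inter (measurableSet_le hh hk)) measurable_const ?_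
  refine Measurable.ite ((measurableSet_le hg hk).inter (measurableSet_le hk hh)) measurable_const ?_
  exact (hk.sub hh).div (((hf.sub hg).sub hh).add hk)

lemma measurable_sadB_comp {Ω : Type*} {m' : MeasurableSpace Ω} {f g h k : Ω → ℝ}
    (hf : Measurable[m'] f) (hg : Measurable[m'] g) (hh : Measurable[m'] h)
    (hk : Measurable[m'] k) :
    Measurable[m'] (fun ω => sadB (f ω) (g ω) (h ω) (k ω)) := by
  unfold sadB
  refine Measurable.ite ((measurableSet_le hh hf).inter (measurableSet_le hf hg)) measurable_const ?_
  refine Measurable.ite ((measurableSet_le hk hg).inter (measurableSet_le hg hf)) measurable_const ?_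
  refine Measurable.ite ((measurableSet_le hf hh).inter (measurableSet_le hh hk)) measurable_const ?_
  refine Measurable.ite ((measurableSet_le hg hk).inter (measurableSet_le hk hh)) measurable_const ?_
  exact (hk.sub hg).div (((hf.sub hg).sub hh).add hk)

lemma measurable_phi_comp {Ω : Type*} {m' : MeasurableSpace Ω} {f g h k a b : Ω → ℝ}
    (hf : Measurable[m'] f) (hg : Measurable[m'] g) (hh : Measurable[m'] h)
    (hk : Measurable[m'] k) (ha : Measurable[m'] a) (hb : Measurable[m'] b) :
    Measurable[m'] (fun ω => phi (f ω) (g ω) (h ω) (k ω) (a ω) (b ω)) := by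
  unfold phi
  exact ((((ha.mul (measurable_const.sub hb)).mul hg).add
    (((measurable_const.sub ha).mul hb).mul hh)).add ((ha.mul hb).mul hf)).add
    (((measurable_const.sub ha).mul (measurable_const.sub hb)).mul hk)

variable {Ω : Type*} {m : MeasurableSpace Ω} (P : Measure Ω) (F : Filtration ℕ m)
  (N : ℕ) (X Y W : ℕ → Ω → ℝ)

/-- Backward construction of the optimal pair and the value process:
`yStrat j = (p*_{N-j}, q*_{N-j}, g_{N-j})` where `g_n` is the realized value-to-go. -/
def yStrat : ℕ → ((Ω → ℝ) × (Ω → ℝ) × (Ω → ℝ))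
  | 0 => (fun _ => 1, fun _ => 1, W N)
  | (j+1) =>
    let g := (yStrat j).2.2
    let v := P[g | F (N - (j+1))]
    let a : Ω → ℝ := fun ω =>
      sadA (W (N - (j+1)) ω) (X (N - (j+1)) ω) (Y (N - (j+1)) ω) (v ω)
    let b : Ω → ℝ := fun ω =>
      sadB (W (N - (j+1)) ω) (X (N - (j+1)) ω) (Y (N - (j+1)) ω) (v ω)
    (a, b, fun ω => phi (W (N - (j+1)) ω) (X (N - (j+1)) ω) (Y (N - (j+1)) ω) (g ω) (a ω) (b ω))



variable {Ω : Type*} {m : MeasurableSpace Ω}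

lemma yStrat_succ_fst (P : Measure Ω) (F : Filtration ℕ m) (N : ℕ) (X Y W : ℕ → Ω → ℝ)
    (j : ℕ) :
    (yStrat P F N X Y W (j+1)).1 = fun ω =>
      sadA (W (N - (j+1)) ω) (X (N - (j+1)) ω) (Y (N - (j+1)) ω)
        ((P[(yStrat P F N X Y W j).2.2 | F (N - (j+1))]) ω) := rfl

lemma yStrat_succ_snd (P : Measure Ω) (F : Filtration ℕ m) (N : ℕ) (X Y W : ℕ → Ω → ℝ)
    (j : ℕ) :
    (yStrat P F N X Y W (j+1)).2.1 = fun ω =>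
      sadB (W (N - (j+1)) ω) (X (N - (j+1)) ω) (Y (N - (j+1)) ω)
        ((P[(yStrat P F N X Y W j).2.2 | F (N - (j+1))]) ω) := rfl

lemma yStrat_succ_thd (P : Measure Ω) (F : Filtration ℕ m) (N : ℕ) (X Y W : ℕ → Ω → ℝ)
    (j : ℕ) :
    (yStrat P F N X Y W (j+1)).2.2 = fun ω =>
      phi (W (N - (j+1)) ω) (X (N - (j+1)) ω) (Y (N - (j+1)) ω)
        ((yStrat P F N X Y W j).2.2 ω)
        ((yStrat P F N X Y W (j+1)).1 ω) ((yStrat P F N X Y W (j+1)).2.1 ω) := rfl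

/-- The optimal strategies and value-to-go process. -/
def psD (P : Measure Ω) (F : Filtration ℕ m) (N : ℕ) (X Y W : ℕ → Ω → ℝ) (n : ℕ) : Ω → ℝ :=
  (yStrat P F N X Y W (N - n)).1

def qsD (P : Measure Ω) (F : Filtration ℕ m) (N : ℕ) (X Y W : ℕ → Ω → ℝ) (n : ℕ) : Ω → ℝ :=
  (yStrat P F N X Y W (N - n)).2.1

def gD (P : Measure Ω) (F : Filtration ℕ m) (N : ℕ) (X Y W : ℕ → Ω → ℝ) (n : ℕ) : Ω → ℝ :=
  (yStrat P F N X Y W (N - n)).2.2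

lemma gD_top (P : Measure Ω) (F : Filtration ℕ m) (N : ℕ) (X Y W : ℕ → Ω → ℝ) :
    gD P F N X Y W N = W N := by
  unfold gD; rw [Nat.sub_self]; rfl

lemma psD_top (P : Measure Ω) (F : Filtration ℕ m) (N : ℕ) (X Y W : ℕ → Ω → ℝ) :
    psD P F N X Y W N = fun _ => 1 := by
  unfold psD; rw [Nat.sub_self]; rfl

lemma qsD_top (P : Measure Ω) (F : Filtration ℕ m) (N : ℕ) (X Y W : ℕ → Ω → ℝ) :
    qsD P F N X Y W N = fun _ => 1 := by
  unfold qsD; rw [Nat.sub_self]; rfl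

lemma yStrat_eqs (P : Measure Ω) (F : Filtration ℕ m) (N : ℕ) (X Y W : ℕ → Ω → ℝ)
    (n : ℕ) (hnN : n < N) :
    psD P F N X Y W n = (fun ω => sadA (W n ω) (X n ω) (Y n ω)
        ((P[gD P F N X Y W (n+1) | F n]) ω)) ∧
    qsD P F N X Y W n = (fun ω => sadB (W n ω) (X n ω) (Y n ω)
        ((P[gD P F N X Y W (n+1) | F n]) ω)) ∧
    gD P F N X Y W n = (fun ω => phi (W n ω) (X n ω) (Y n ω) (gD P F N X Y W (n+1) ω)
        (psD P F N X Y W n ω) (qsD P F N X Y W n ω)) := by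
  have hj : N - n = (N - (n+1)) + 1 := by omega
  have hj2 : N - ((N - (n+1)) + 1) = n := by omega
  unfold psD qsD gD
  rw [hj, yStrat_succ_thd, yStrat_succ_fst, yStrat_succ_snd, hj2]
  exact ⟨rfl, rfl, funext fun ω => rfl⟩

lemma psD_mem (P : Measure Ω) (F : Filtration ℕ m) (N : ℕ) (X Y W : ℕ → Ω → ℝ)
    (n : ℕ) (ω : Ω) : psD P F N X Y W n ω ∈ Set.Icc (0:ℝ) 1 ∧
      qsD P F N X Y W n ω ∈ Set.Icc (0:ℝ) 1 := by
  unfold psD qsD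
  cases hj : N - n with
  | zero => exact ⟨⟨zero_le_one, le_rfl⟩, ⟨zero_le_one, le_rfl⟩⟩
  | succ j =>
    rw [yStrat_succ_fst, yStrat_succ_snd]
    exact ⟨(sad_spec _ _ _ _).1, (sad_spec _ _ _ _).2.1⟩



/-- Integrability of `fun ω => phi (W n ω) (X n ω) (Y n ω) (v ω) (a ω) (b ω)`. -/
lemma integrable_phi (P : Measure Ω) (F : Filtration ℕ m) (N : ℕ) (X Y W : ℕ → Ω → ℝ)
    (hadapt : ∀ n, 1 ≤ n → n ≤ N →
      Measurable[F n] (X n) ∧ Measurable[F n] (Y n) ∧ Measurable[F n] (W n))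
    (hint : ∀ n, 1 ≤ n → n ≤ N →
      Integrable (X n) P ∧ Integrable (Y n) P ∧ Integrable (W n) P)
    (n : ℕ) (hn1 : 1 ≤ n) (hnN : n ≤ N) {a b v : Ω → ℝ}
    (ha : AEStronglyMeasurable a P) (hb : AEStronglyMeasurable b P)
    (hamem : ∀ ω, a ω ∈ Set.Icc (0:ℝ) 1) (hbmem : ∀ ω, b ω ∈ Set.Icc (0:ℝ) 1)
    (hv : Integrable v P) :
    Integrable (fun ω => phi (W n ω) (X n ω) (Y n ω) (v ω) (a ω) (b ω)) P := by
  obtain ⟨hXm, hYm, hWm⟩ := hadapt n hn1 hnN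
  obtain ⟨hXi, hYi, hWi⟩ := hint n hn1 hnN
  have hXa : AEStronglyMeasurable (X n) P := hXi.aestronglyMeasurable
  have hYa : AEStronglyMeasurable (Y n) P := hYi.aestronglyMeasurable
  have hWa : AEStronglyMeasurable (W n) P := hWi.aestronglyMeasurable
  have hva : AEStronglyMeasurable v P := hv.aestronglyMeasurable
  have hmeas : AEStronglyMeasurable
      (fun ω => phi (W n ω) (X n ω) (Y n ω) (v ω) (a ω) (b ω)) P := by
    unfold phi
    exact ((((ha.mul (aestronglyMeasurable_const.sub hb)).mul hXa).add
      (((aestronglyMeasurable_const.sub ha).mul hb).mul hYa)).add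
      ((ha.mul hb).mul hWa)).add
      (((aestronglyMeasurable_const.sub ha).mul (aestronglyMeasurable_const.sub hb)).mul hva)
  refine Integrable.mono' (((hXi.abs.add hYi.abs).add hWi.abs).add hv.abs) hmeas ?_
  refine Filter.Eventually.of_forall fun ω => ?_
  rw [Real.norm_eq_abs]
  exact phi_abs_le (hamem ω) (hbmem ω)

/-- Integrability of the value-to-go process `gD`. -/
lemma gD_integrable (P : Measure Ω) [IsFiniteMeasure P] (F : Filtration ℕ m) (N : ℕ)
    (hN : 1 ≤ N) (X Y W : ℕ → Ω → ℝ)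
    (hadapt : ∀ n, 1 ≤ n → n ≤ N →
      Measurable[F n] (X n) ∧ Measurable[F n] (Y n) ∧ Measurable[F n] (W n))
    (hint : ∀ n, 1 ≤ n → n ≤ N →
      Integrable (X n) P ∧ Integrable (Y n) P ∧ Integrable (W n) P) :
    ∀ j, j ≤ N - 1 → Integrable ((yStrat P F N X Y W j).2.2) P := by
  intro j
  induction j with
  | zero => intro _; exact (hint N hN le_rfl).2.2
  | succ j ih =>
    intro hj
    have ihg := ih (by omega)
    set n := N - (j+1) with hn
    have hn1 : 1 ≤ n := by omega
    have hnN : n ≤ N := by omega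
    rw [yStrat_succ_thd, yStrat_succ_fst, yStrat_succ_snd, ← hn]
    set v := P[(yStrat P F N X Y W j).2.2 | F n] with hv
    have hvm : Measurable[F n] v := stronglyMeasurable_condExp.measurable
    obtain ⟨hXm, hYm, hWm⟩ := hadapt n hn1 hnN
    have ham : Measurable[F n] (fun ω => sadA (W n ω) (X n ω) (Y n ω) (v ω)) :=
      measurable_sadA_comp hWm hXm hYm hvm
    have hbm : Measurable[F n] (fun ω => sadB (W n ω) (X n ω) (Y n ω) (v ω)) :=
      measurable_sadB_comp hWm hXm hYm hvm
    exact integrable_phi P F N X Y W hadapt hint n hn1 hnN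
      (ham.mono (F.le n) le_rfl).aestronglyMeasurable
      (hbm.mono (F.le n) le_rfl).aestronglyMeasurable
      (fun ω => (sad_spec _ _ _ _).1) (fun ω => (sad_spec _ _ _ _).2.1) ihg

/-- `psD`, `qsD` are genuine randomized strategies. -/
lemma psD_isRandStrat (P : Measure Ω) (F : Filtration ℕ m) (N : ℕ) (X Y W : ℕ → Ω → ℝ)
    (hadapt : ∀ n, 1 ≤ n → n ≤ N →
      Measurable[F n] (X n) ∧ Measurable[F n] (Y n) ∧ Measurable[F n] (W n)) :
    IsRandStrat F N (psD P F N X Y W) ∧ IsRandStrat F N (qsD P F N X Y W) := by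
  refine ⟨⟨fun n hn1 hnN => ⟨?_, fun ω => (psD_mem P F N X Y W n ω).1⟩,
      fun ω => by rw [psD_top]⟩,
    ⟨fun n hn1 hnN => ⟨?_, fun ω => (psD_mem P F N X Y W n ω).2⟩,
      fun ω => by rw [qsD_top]⟩⟩
  · rcases eq_or_lt_of_le hnN with hEq | hlt
    · subst hEq; rw [psD_top]; exact measurable_const
    · obtain ⟨hXm, hYm, hWm⟩ := hadapt n hn1 hnN
      rw [(yStrat_eqs P F N X Y W n hlt).1]
      exact measurable_sadA_comp hWm hXm hYm stronglyMeasurable_condExp.measurable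
  · rcases eq_or_lt_of_le hnN with hEq | hlt
    · subst hEq; rw [qsD_top]; exact measurable_const
    · obtain ⟨hXm, hYm, hWm⟩ := hadapt n hn1 hnN
      rw [(yStrat_eqs P F N X Y W n hlt).2.1]
      exact measurable_sadB_comp hWm hXm hYm stronglyMeasurable_condExp.measurable


lemma Gval_integrable (P : Measure Ω) (F : Filtration ℕ m) (N : ℕ) (X Y W : ℕ → Ω → ℝ)
    (hadapt : ∀ n, 1 ≤ n → n ≤ N →
      Measurable[F n] (X n) ∧ Measurable[F n] (Y n) ∧ Measurable[F n] (W n))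
    (hint : ∀ n, 1 ≤ n → n ≤ N →
      Integrable (X n) P ∧ Integrable (Y n) P ∧ Integrable (W n) P)
    (p q : ℕ → Ω → ℝ)
    (hp : ∀ n, 1 ≤ n → n ≤ N → Measurable[F n] (p n) ∧ ∀ ω, p n ω ∈ Set.Icc (0:ℝ) 1)
    (hq : ∀ n, 1 ≤ n → n ≤ N → Measurable[F n] (q n) ∧ ∀ ω, q n ω ∈ Set.Icc (0:ℝ) 1) :
    ∀ j n, n + j = N + 1 → 1 ≤ n → Integrable (fun ω => Gval N X Y W p q n ω) P := by
  intro j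
  induction j with
  | zero =>
    intro n h hn1
    have hn : n = N + 1 := by omega
    subst hn
    have : (fun ω => Gval N X Y W p q (N+1) ω) = fun _ => (0:ℝ) :=
      funext fun ω => Gval_top N X Y W p q ω
    rw [this]
    exact integrable_zero _ _ _
  | succ j ih =>
    intro n h hn1
    have hnN : n ≤ N := by omega
    rw [show (fun ω => Gval N X Y W p q n ω)
        = fun ω => phi (W n ω) (X n ω) (Y n ω) (Gval N X Y W p q (n+1) ω) (p n ω) (q n ω)
      from funext fun ω => Gval_rec N X Y W p q n hn1 hnN ω]
    exact integrable_phi P F N X Y W hadapt hint n hn1 hnN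
      (((hp n hn1 hnN).1.mono (F.le n) le_rfl).aestronglyMeasurable)
      (((hq n hn1 hnN).1.mono (F.le n) le_rfl).aestronglyMeasurable)
      (hp n hn1 hnN).2 (hq n hn1 hnN).2 (ih (n+1) (by omega) (by omega))

/-- The realized value along the optimal pair is the value process `gD`. -/
lemma Gval_eq_gD (P : Measure Ω) (F : Filtration ℕ m) (N : ℕ) (hN : 1 ≤ N)
    (X Y W : ℕ → Ω → ℝ) :
    ∀ j n, n + j = N → 1 ≤ n → ∀ ω,
      Gval N X Y W (psD P F N X Y W) (qsD P F N X Y W) n ω = gD P F N X Y W n ω := by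
  intro j
  induction j with
  | zero =>
    intro n h hn1 ω
    have hn : n = N := by omega
    rw [hn, Gval_rec N X Y W _ _ N hN le_rfl ω, Gval_top, psD_top, qsD_top, gD_top]
    simp [phi]
  | succ j ih =>
    intro n h hn1 ω
    have hnN : n < N := by omega
    rw [Gval_rec N X Y W _ _ n hn1 (le_of_lt hnN) ω, ih (n+1) (by omega) (by omega) ω]
    conv_rhs => rw [(yStrat_eqs P F N X Y W n hnN).2.2]


/-- Core one-sided optimality: if `(ps, qs)` is built from pointwise saddle points of the
local 2x2 games with continuation value `P[g (n+1) | F n]`, then no strategy `p` of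
player 1 can do better against `qs` than the value process `g`. -/
lemma side_le (P : Measure Ω) [IsProbabilityMeasure P] (F : Filtration ℕ m)
    (N : ℕ) (hN : 1 ≤ N) (X Y W : ℕ → Ω → ℝ)
    (hadapt : ∀ n, 1 ≤ n → n ≤ N →
      Measurable[F n] (X n) ∧ Measurable[F n] (Y n) ∧ Measurable[F n] (W n))
    (hint : ∀ n, 1 ≤ n → n ≤ N →
      Integrable (X n) P ∧ Integrable (Y n) P ∧ Integrable (W n) P)
    (p ps qs g : ℕ → Ω → ℝ)
    (hp : ∀ n, 1 ≤ n → n ≤ N → Measurable[F n] (p n) ∧ ∀ ω, p n ω ∈ Set.Icc (0:ℝ) 1)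
    (hpN : ∀ ω, p N ω = 1)
    (hps : ∀ n, 1 ≤ n → n ≤ N → Measurable[F n] (ps n) ∧ ∀ ω, ps n ω ∈ Set.Icc (0:ℝ) 1)
    (hqs : ∀ n, 1 ≤ n → n ≤ N → Measurable[F n] (qs n) ∧ ∀ ω, qs n ω ∈ Set.Icc (0:ℝ) 1)
    (hqsN : ∀ ω, qs N ω = 1)
    (hgN : ∀ ω, g N ω = W N ω)
    (hgrec : ∀ n, 1 ≤ n → n < N → ∀ ω,
      g n ω = phi (W n ω) (X n ω) (Y n ω) (g (n+1) ω) (ps n ω) (qs n ω))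
    (hgint : ∀ n, 1 ≤ n → n ≤ N → Integrable (g n) P)
    (hsad : ∀ n, 1 ≤ n → n < N → ∀ᵐ ω ∂P,
      phi (W n ω) (X n ω) (Y n ω) ((P[g (n+1) | F n]) ω) (p n ω) (qs n ω) ≤
      phi (W n ω) (X n ω) (Y n ω) ((P[g (n+1) | F n]) ω) (ps n ω) (qs n ω)) :
    ∀ j n, n + j = N → 1 ≤ n →
      P[fun ω => Gval N X Y W p qs n ω | F n] ≤ᵐ[P] P[g n | F n] := by
  intro j
  induction j with
  | zero =>
    intro n h hn1
    have hn : n = N := by omega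
    have he : (fun ω => Gval N X Y W p qs n ω) = g n := by
      funext ω
      rw [hn, Gval_rec N X Y W p qs N hN le_rfl ω, Gval_top, hgN ω, hpN ω, hqsN ω]
      simp [phi]
    rw [he]
  | succ j ih =>
    intro n h hn1
    have hnN : n < N := by omega
    have hn1N : n ≤ N := le_of_lt hnN
    obtain ⟨hpm, hpmem⟩ := hp n hn1 hn1N
    obtain ⟨hqm, hqmem⟩ := hqs n hn1 hn1N
    obtain ⟨hpsm, hpsmem⟩ := hps n hn1 hn1N
    obtain ⟨hXm, hYm, hWm⟩ := hadapt n hn1 hn1N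
    -- abbreviations
    set G' : Ω → ℝ := fun ω => Gval N X Y W p qs (n+1) ω with hG'
    have hG'int : Integrable G' P :=
      Gval_integrable P F N X Y W hadapt hint p qs hp hqs (N - n) (n+1) (by omega) (by omega)
    have hg'int : Integrable (g (n+1)) P := hgint (n+1) (by omega) (by omega)
    set c : Ω → ℝ := fun ω => (1 - p n ω) * (1 - qs n ω) with hc
    set s : Ω → ℝ := fun ω => phi (W n ω) (X n ω) (Y n ω) 0 (p n ω) (qs n ω) with hs
    set cs : Ω → ℝ := fun ω => (1 - ps n ω) * (1 - qs n ω) with hcs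
    set ss : Ω → ℝ := fun ω => phi (W n ω) (X n ω) (Y n ω) 0 (ps n ω) (qs n ω) with hss
    set v : Ω → ℝ := P[g (n+1) | F n] with hv
    have hcmem : ∀ ω, c ω ∈ Set.Icc (0:ℝ) 1 := fun ω =>
      ⟨mul_nonneg (by linarith [(hpmem ω).2]) (by linarith [(hqmem ω).2]),
        mul_le_one₀ (by linarith [(hpmem ω).1]) (by linarith [(hqmem ω).2])
          (by linarith [(hqmem ω).1])⟩
    have hcsmem : ∀ ω, cs ω ∈ Set.Icc (0:ℝ) 1 := fun ω =>
      ⟨mul_nonneg (by linarith [(hpsmem ω).2]) (by linarith [(hqmem ω).2]),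
        mul_le_one₀ (by linarith [(hpsmem ω).1]) (by linarith [(hqmem ω).2])
          (by linarith [(hqmem ω).1])⟩
    have hcm : StronglyMeasurable[F n] c :=
      ((measurable_const.sub hpm).mul (measurable_const.sub hqm)).stronglyMeasurable
    have hcsm : StronglyMeasurable[F n] cs :=
      ((measurable_const.sub hpsm).mul (measurable_const.sub hqm)).stronglyMeasurable
    have hsm : StronglyMeasurable[F n] s :=
      (measurable_phi_comp hWm hXm hYm measurable_const hpm hqm).stronglyMeasurable
    have hssm : StronglyMeasurable[F n] ss :=
      (measurable_phi_comp hWm hXm hYm measurable_const hpsm hqm).stronglyMeasurable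
    have hsint : Integrable s P :=
      integrable_phi P F N X Y W hadapt hint n hn1 hn1N
        ((hpm.mono (F.le n) le_rfl).aestronglyMeasurable)
        ((hqm.mono (F.le n) le_rfl).aestronglyMeasurable) hpmem hqmem (integrable_const 0)
    have hssint : Integrable ss P :=
      integrable_phi P F N X Y W hadapt hint n hn1 hn1N
        ((hpsm.mono (F.le n) le_rfl).aestronglyMeasurable)
        ((hqm.mono (F.le n) le_rfl).aestronglyMeasurable) hpsmem hqmem (integrable_const 0)
    have hcbd : ∀ᵐ ω ∂P, ‖c ω‖ ≤ 1 := Filter.Eventually.of_forall fun ω => by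
      rw [Real.norm_eq_abs, abs_of_nonneg (hcmem ω).1]; exact (hcmem ω).2
    have hcsbd : ∀ᵐ ω ∂P, ‖cs ω‖ ≤ 1 := Filter.Eventually.of_forall fun ω => by
      rw [Real.norm_eq_abs, abs_of_nonneg (hcsmem ω).1]; exact (hcsmem ω).2
    have hcG'int : Integrable (fun ω => c ω * G' ω) P :=
      hG'int.bdd_mul ((hcm.mono (F.le n)).aestronglyMeasurable) hcbd
    have hcsgint : Integrable (fun ω => cs ω * g (n+1) ω) P :=
      hg'int.bdd_mul ((hcsm.mono (F.le n)).aestronglyMeasurable) hcsbd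
    -- decompose the conditional expectation of the value-to-go of (p, qs)
    have hsplit : (fun ω => Gval N X Y W p qs n ω) = fun ω => s ω + c ω * G' ω := by
      funext ω
      rw [Gval_rec N X Y W p qs n hn1 hn1N ω]
      simp only [hs, hc, hG', phi]
      ring
    have e1 : P[fun ω => Gval N X Y W p qs n ω | F n]
        =ᵐ[P] P[s | F n] + P[fun ω => c ω * G' ω | F n] := by
      rw [hsplit]
      exact condExp_add hsint hcG'int (F n)
    have e2 : P[s | F n] = s := condExp_of_stronglyMeasurable (F.le n) hsm hsint
    have e3 : P[fun ω => c ω * G' ω | F n] =ᵐ[P] fun ω => c ω * (P[G' | F n]) ω :=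
      condExp_stronglyMeasurable_mul_of_bound (F.le n) hcm hG'int 1 hcbd
    -- tower property and the induction hypothesis
    have e4 : P[G' | F n] ≤ᵐ[P] v := by
      have t1 : P[P[G' | F (n+1)] | F n] =ᵐ[P] P[G' | F n] :=
        condExp_condExp_of_le (F.mono (Nat.le_succ n)) (F.le (n+1))
      have t2 : P[P[g (n+1) | F (n+1)] | F n] =ᵐ[P] P[g (n+1) | F n] :=
        condExp_condExp_of_le (F.mono (Nat.le_succ n)) (F.le (n+1))
      have t3 : P[P[G' | F (n+1)] | F n] ≤ᵐ[P] P[P[g (n+1) | F (n+1)] | F n] :=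
        condExp_mono integrable_condExp integrable_condExp (ih (n+1) (by omega) (by omega))
      exact (t1.symm.le.trans t3).trans t2.le
    -- the same decomposition for g
    have hsplit' : g n = fun ω => ss ω + cs ω * g (n+1) ω := by
      funext ω
      rw [hgrec n hn1 hnN ω]
      simp only [hss, hcs, phi]
      ring
    have f1 : P[g n | F n] =ᵐ[P] P[ss | F n] + P[fun ω => cs ω * g (n+1) ω | F n] := by
      rw [hsplit']
      exact condExp_add hssint hcsgint (F n)
    have f2 : P[ss | F n] = ss := condExp_of_stronglyMeasurable (F.le n) hssm hssint
    have f3 : P[fun ω => cs ω * g (n+1) ω | F n] =ᵐ[P] fun ω => cs ω * v ω :=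
      condExp_stronglyMeasurable_mul_of_bound (F.le n) hcsm hg'int 1 hcsbd
    -- put everything together
    have goal1 : P[fun ω => Gval N X Y W p qs n ω | F n]
        ≤ᵐ[P] fun ω => s ω + c ω * v ω := by
      filter_upwards [e1, e3, e4] with ω h1 h3 h4
      rw [h1, Pi.add_apply, e2, h3]
      have := (hcmem ω).1
      nlinarith [h4]
    have goal2 : (fun ω => s ω + c ω * v ω) ≤ᵐ[P] fun ω => ss ω + cs ω * v ω := by
      filter_upwards [hsad n hn1 hnN] with ω hω
      have l1 : s ω + c ω * v ω
          = phi (W n ω) (X n ω) (Y n ω) (v ω) (p n ω) (qs n ω) := by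
        simp only [hs, hc, phi]; ring
      have l2 : ss ω + cs ω * v ω
          = phi (W n ω) (X n ω) (Y n ω) (v ω) (ps n ω) (qs n ω) := by
        simp only [hss, hcs, phi]; ring
      rw [l1, l2]
      exact hω
    have goal3 : (fun ω => ss ω + cs ω * v ω) ≤ᵐ[P] P[g n | F n] := by
      filter_upwards [f1, f3] with ω h1 h3
      rw [h1, Pi.add_apply, f2, h3]
    exact (goal1.trans goal2).trans goal3


lemma phi_neg (w x y v a b : ℝ) : phi (-w) (-y) (-x) (-v) b a = -phi w x y v a b := by
  unfold phi; ring

/-- Integral form of `side_le`. -/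
lemma side_le_integral (P : Measure Ω) [IsProbabilityMeasure P] (F : Filtration ℕ m)
    (N : ℕ) (hN : 1 ≤ N) (X Y W : ℕ → Ω → ℝ)
    (hadapt : ∀ n, 1 ≤ n → n ≤ N →
      Measurable[F n] (X n) ∧ Measurable[F n] (Y n) ∧ Measurable[F n] (W n))
    (hint : ∀ n, 1 ≤ n → n ≤ N →
      Integrable (X n) P ∧ Integrable (Y n) P ∧ Integrable (W n) P)
    (p ps qs g : ℕ → Ω → ℝ)
    (hp : ∀ n, 1 ≤ n → n ≤ N → Measurable[F n] (p n) ∧ ∀ ω, p n ω ∈ Set.Icc (0:ℝ) 1)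
    (hpN : ∀ ω, p N ω = 1)
    (hps : ∀ n, 1 ≤ n → n ≤ N → Measurable[F n] (ps n) ∧ ∀ ω, ps n ω ∈ Set.Icc (0:ℝ) 1)
    (hqs : ∀ n, 1 ≤ n → n ≤ N → Measurable[F n] (qs n) ∧ ∀ ω, qs n ω ∈ Set.Icc (0:ℝ) 1)
    (hqsN : ∀ ω, qs N ω = 1)
    (hgN : ∀ ω, g N ω = W N ω)
    (hgrec : ∀ n, 1 ≤ n → n < N → ∀ ω,
      g n ω = phi (W n ω) (X n ω) (Y n ω) (g (n+1) ω) (ps n ω) (qs n ω))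
    (hgint : ∀ n, 1 ≤ n → n ≤ N → Integrable (g n) P)
    (hsad : ∀ n, 1 ≤ n → n < N → ∀ᵐ ω ∂P,
      phi (W n ω) (X n ω) (Y n ω) ((P[g (n+1) | F n]) ω) (p n ω) (qs n ω) ≤
      phi (W n ω) (X n ω) (Y n ω) ((P[g (n+1) | F n]) ω) (ps n ω) (qs n ω)) :
    ∫ ω, Gval N X Y W p qs 1 ω ∂P ≤ ∫ ω, g 1 ω ∂P := by
  have key := side_le P F N hN X Y W hadapt hint p ps qs g hp hpN hps hqs hqsN hgN
    hgrec hgint hsad (N - 1) 1 (by omega) le_rfl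
  calc ∫ ω, Gval N X Y W p qs 1 ω ∂P
      = ∫ ω, (P[fun ω => Gval N X Y W p qs 1 ω | F 1]) ω ∂P :=
        (integral_condExp (F.le 1)).symm
    _ ≤ ∫ ω, (P[g 1 | F 1]) ω ∂P :=
        integral_mono_ae integrable_condExp integrable_condExp key
    _ = ∫ ω, g 1 ω ∂P := integral_condExp (F.le 1)

lemma Gval_neg (N : ℕ) (X Y W p q : ℕ → Ω → ℝ) (n : ℕ) (ω : Ω) :
    Gval N (fun k ω => -(Y k ω)) (fun k ω => -(X k ω)) (fun k ω => -(W k ω)) q p n ω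
      = -Gval N X Y W p q n ω := by
  unfold Gval
  rw [← Finset.sum_neg_distrib]
  refine Finset.sum_congr rfl fun k _ => ?_
  have : ∀ i ∈ Finset.Icc n (k - 1), (1 - q i ω) * (1 - p i ω)
      = (1 - p i ω) * (1 - q i ω) := fun i _ => mul_comm _ _
  rw [Finset.prod_congr rfl this]
  ring


lemma Gval_abs_bound (N : ℕ) (X Y W p q : ℕ → Ω → ℝ)
    (hp : ∀ n, 1 ≤ n → n ≤ N → ∀ ω, p n ω ∈ Set.Icc (0:ℝ) 1)
    (hq : ∀ n, 1 ≤ n → n ≤ N → ∀ ω, q n ω ∈ Set.Icc (0:ℝ) 1) (ω : Ω) :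
    |Gval N X Y W p q 1 ω| ≤ ∑ n ∈ Finset.Icc 1 N, (|X n ω| + |Y n ω| + |W n ω|) := by
  unfold Gval
  refine (Finset.abs_sum_le_sum_abs _ _).trans (Finset.sum_le_sum fun n hn => ?_)
  rw [Finset.mem_Icc] at hn
  have hstage : p n ω * (1 - q n ω) * X n ω + (1 - p n ω) * q n ω * Y n ω +
      p n ω * q n ω * W n ω = phi (W n ω) (X n ω) (Y n ω) 0 (p n ω) (q n ω) := by
    unfold phi; ring
  rw [abs_mul, hstage]
  have h1 : |∏ k ∈ Finset.Icc 1 (n - 1), (1 - p k ω) * (1 - q k ω)| ≤ 1 := by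
    rw [Finset.abs_prod]
    refine Finset.prod_le_one (fun k _ => abs_nonneg _) fun k hk => ?_
    rw [Finset.mem_Icc] at hk
    have hk1 : 1 ≤ k := hk.1
    have hkN : k ≤ N := by omega
    obtain ⟨hp0, hp1⟩ := hp k hk1 hkN ω
    obtain ⟨hq0, hq1⟩ := hq k hk1 hkN ω
    rw [abs_mul, abs_of_nonneg (by linarith), abs_of_nonneg (by linarith)]
    nlinarith
  have h2 : |phi (W n ω) (X n ω) (Y n ω) 0 (p n ω) (q n ω)|
      ≤ |X n ω| + |Y n ω| + |W n ω| := by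
    have := phi_abs_le (w := W n ω) (x := X n ω) (y := Y n ω) (v := 0)
      (hp n hn.1 hn.2 ω) (hq n hn.1 hn.2 ω)
    simpa using this
  calc |∏ k ∈ Finset.Icc 1 (n - 1), (1 - p k ω) * (1 - q k ω)| *
        |phi (W n ω) (X n ω) (Y n ω) 0 (p n ω) (q n ω)|
      ≤ 1 * (|X n ω| + |Y n ω| + |W n ω|) :=
        mul_le_mul h1 h2 (abs_nonneg _) zero_le_one
    _ = |X n ω| + |Y n ω| + |W n ω| := one_mul _

lemma payoff_bound (P : Measure Ω) [IsProbabilityMeasure P] (F : Filtration ℕ m)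
    (N : ℕ) (X Y W : ℕ → Ω → ℝ)
    (hadapt : ∀ n, 1 ≤ n → n ≤ N →
      Measurable[F n] (X n) ∧ Measurable[F n] (Y n) ∧ Measurable[F n] (W n))
    (hint : ∀ n, 1 ≤ n → n ≤ N →
      Integrable (X n) P ∧ Integrable (Y n) P ∧ Integrable (W n) P)
    (p q : ℕ → Ω → ℝ)
    (hp : ∀ n, 1 ≤ n → n ≤ N → Measurable[F n] (p n) ∧ ∀ ω, p n ω ∈ Set.Icc (0:ℝ) 1)
    (hq : ∀ n, 1 ≤ n → n ≤ N → Measurable[F n] (q n) ∧ ∀ ω, q n ω ∈ Set.Icc (0:ℝ) 1) :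
    |∫ ω, Gval N X Y W p q 1 ω ∂P|
      ≤ ∫ ω, (∑ n ∈ Finset.Icc 1 N, (|X n ω| + |Y n ω| + |W n ω|)) ∂P := by
  have hGint : Integrable (fun ω => Gval N X Y W p q 1 ω) P :=
    Gval_integrable P F N X Y W hadapt hint p q hp hq N 1 (by omega) le_rfl
  have hBint : Integrable
      (fun ω => ∑ n ∈ Finset.Icc 1 N, (|X n ω| + |Y n ω| + |W n ω|)) P := by
    apply integrable_finset_sum
    intro i hi
    rw [Finset.mem_Icc] at hi
    exact (((hint i hi.1 hi.2).1.abs.add (hint i hi.1 hi.2).2.1.abs).add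
      (hint i hi.1 hi.2).2.2.abs)
  have hbd := fun ω => Gval_abs_bound N X Y W p q (fun n h1 h2 => (hp n h1 h2).2)
    (fun n h1 h2 => (hq n h1 h2).2) ω
  rw [abs_le]
  constructor
  · rw [← integral_neg]
    refine integral_mono hBint.neg hGint fun ω => ?_
    have := (abs_le.mp (hbd ω)).1
    simpa using this
  · exact integral_mono hGint hBint fun ω => (abs_le.mp (hbd ω)).2


lemma randPayoff_eq_Gval {Ω : Type*} [MeasurableSpace Ω] (P : Measure Ω) (N : ℕ)
    (X Y W p q : ℕ → Ω → ℝ) :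
    randPayoff P N X Y W p q = ∫ ω, Gval N X Y W p q 1 ω ∂P := by
  unfold randPayoff Gval
  rfl

end Yasuda

open Yasuda in
set_option maxHeartbeats 1000000 in
/-- (Yasuda.) For integrable adapted processes `X, Y, W` with *no
ordering assumption*, the randomized (mixed) extension of the Dynkin–Neveu stopping
game has a saddle point `(p*, q*)` in randomized stopping strategies:
`R(p,q*) ≤ R(p*,q*) ≤ R(p*,q)`; in particular the game has a value,
`sup_p inf_q R(p,q) = inf_q sup_p R(p,q)`. -/
theorem yasuda_randomized_saddle {Ω : Type*} {m : MeasurableSpace Ω}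
    (P : Measure Ω) [IsProbabilityMeasure P] (F : Filtration ℕ m)
    (N : ℕ) (hN : 1 ≤ N) (X Y W : ℕ → Ω → ℝ)
    (hadapt : ∀ n, 1 ≤ n → n ≤ N →
      Measurable[F n] (X n) ∧ Measurable[F n] (Y n) ∧ Measurable[F n] (W n))
    (hint : ∀ n, 1 ≤ n → n ≤ N →
      Integrable (X n) P ∧ Integrable (Y n) P ∧ Integrable (W n) P) :
    ∃ ps qs : ℕ → Ω → ℝ, IsRandStrat F N ps ∧ IsRandStrat F N qs ∧
      (∀ p q : ℕ → Ω → ℝ, IsRandStrat F N p → IsRandStrat F N q →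
        randPayoff P N X Y W p qs ≤ randPayoff P N X Y W ps qs ∧
          randPayoff P N X Y W ps qs ≤ randPayoff P N X Y W ps q) ∧
      (⨆ p : {p : ℕ → Ω → ℝ // IsRandStrat F N p},
          ⨅ q : {q : ℕ → Ω → ℝ // IsRandStrat F N q}, randPayoff P N X Y W p.1 q.1) =
        ⨅ q : {q : ℕ → Ω → ℝ // IsRandStrat F N q},
          ⨆ p : {p : ℕ → Ω → ℝ // IsRandStrat F N p}, randPayoff P N X Y W p.1 q.1 := by
  classical
  set ps : ℕ → Ω → ℝ := psD P F N X Y W with hps_def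
  set qs : ℕ → Ω → ℝ := qsD P F N X Y W with hqs_def
  set g : ℕ → Ω → ℝ := gD P F N X Y W with hg_def
  obtain ⟨hpsS, hqsS⟩ := psD_isRandStrat P F N X Y W hadapt
  -- payoff as integral of the value-to-go
  have hRP : ∀ p q : ℕ → Ω → ℝ,
      randPayoff P N X Y W p q = ∫ ω, Gval N X Y W p q 1 ω ∂P := fun p q =>
    randPayoff_eq_Gval P N X Y W p q
  -- properties of the value process
  have hgN : ∀ ω, g N ω = W N ω := fun ω => by rw [hg_def, gD_top]
  have hgrec : ∀ n, 1 ≤ n → n < N → ∀ ω,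
      g n ω = phi (W n ω) (X n ω) (Y n ω) (g (n+1) ω) (ps n ω) (qs n ω) := by
    intro n h1 h2 ω
    conv_lhs => rw [hg_def, (yStrat_eqs P F N X Y W n h2).2.2]
  have hgint : ∀ n, 1 ≤ n → n ≤ N → Integrable (g n) P := fun n h1 h2 =>
    gD_integrable P F N hN X Y W hadapt hint (N - n) (by omega)
  -- the pointwise saddle property of (ps, qs)
  have hsadL : ∀ p : ℕ → Ω → ℝ, IsRandStrat F N p → ∀ n, 1 ≤ n → n < N → ∀ᵐ ω ∂P,
      phi (W n ω) (X n ω) (Y n ω) ((P[g (n+1) | F n]) ω) (p n ω) (qs n ω) ≤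
      phi (W n ω) (X n ω) (Y n ω) ((P[g (n+1) | F n]) ω) (ps n ω) (qs n ω) := by
    intro p hp n h1 h2
    refine Filter.Eventually.of_forall fun ω => ?_
    simp only [hps_def, hqs_def, hg_def, (yStrat_eqs P F N X Y W n h2).1,
      (yStrat_eqs P F N X Y W n h2).2.1]
    exact ((sad_spec _ _ _ _).2.2 _ ((hp.1 n h1 (le_of_lt h2)).2 ω) 0
      ⟨le_rfl, zero_le_one⟩).1
  have hsadR : ∀ q : ℕ → Ω → ℝ, IsRandStrat F N q → ∀ n, 1 ≤ n → n < N → ∀ ω,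
      phi (W n ω) (X n ω) (Y n ω) ((P[g (n+1) | F n]) ω) (ps n ω) (qs n ω) ≤
      phi (W n ω) (X n ω) (Y n ω) ((P[g (n+1) | F n]) ω) (ps n ω) (q n ω) := by
    intro q hq n h1 h2 ω
    simp only [hps_def, hqs_def, hg_def, (yStrat_eqs P F N X Y W n h2).1,
      (yStrat_eqs P F N X Y W n h2).2.1]
    exact ((sad_spec _ _ _ _).2.2 0 ⟨le_rfl, zero_le_one⟩ _
      ((hq.1 n h1 (le_of_lt h2)).2 ω)).2
  -- value of the game
  have hval : randPayoff P N X Y W ps qs = ∫ ω, g 1 ω ∂P := by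
    rw [hRP]
    refine integral_congr_ae (Filter.Eventually.of_forall fun ω => ?_)
    exact Gval_eq_gD P F N hN X Y W (N - 1) 1 (by omega) le_rfl ω
  -- player 1 cannot improve against qs
  have main1 : ∀ p : ℕ → Ω → ℝ, IsRandStrat F N p →
      randPayoff P N X Y W p qs ≤ randPayoff P N X Y W ps qs := by
    intro p hp
    rw [hval, hRP]
    exact side_le_integral P F N hN X Y W hadapt hint p ps qs g hp.1 hp.2
      hpsS.1 hqsS.1 hqsS.2 hgN hgrec hgint (hsadL p hp)
  -- player 2 cannot improve against ps
  have main2 : ∀ q : ℕ → Ω → ℝ, IsRandStrat F N q →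
      randPayoff P N X Y W ps qs ≤ randPayoff P N X Y W ps q := by
    intro q hq
    rw [hval, hRP]
    have hadapt' : ∀ n, 1 ≤ n → n ≤ N →
        Measurable[F n] (fun ω => -(Y n ω)) ∧ Measurable[F n] (fun ω => -(X n ω)) ∧
          Measurable[F n] (fun ω => -(W n ω)) := fun n h1 h2 =>
      ⟨(hadapt n h1 h2).2.1.neg, (hadapt n h1 h2).1.neg, (hadapt n h1 h2).2.2.neg⟩
    have hint' : ∀ n, 1 ≤ n → n ≤ N →
        Integrable (fun ω => -(Y n ω)) P ∧ Integrable (fun ω => -(X n ω)) P ∧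
          Integrable (fun ω => -(W n ω)) P := fun n h1 h2 =>
      ⟨(hint n h1 h2).2.1.neg, (hint n h1 h2).1.neg, (hint n h1 h2).2.2.neg⟩
    have key := side_le_integral P F N hN (fun k ω => -(Y k ω)) (fun k ω => -(X k ω))
      (fun k ω => -(W k ω)) hadapt' hint' q qs ps (fun n ω => -(g n ω))
      hq.1 hq.2 hqsS.1 hpsS.1 hpsS.2
      (fun ω => by show -(g N ω) = -(W N ω); rw [hgN ω])
      (fun n h1 h2 ω => by
        show -(g n ω) = phi (-(W n ω)) (-(Y n ω)) (-(X n ω)) (-(g (n+1) ω)) (qs n ω) (ps n ω)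
        rw [hgrec n h1 h2 ω]
        exact (phi_neg _ _ _ _ _ _).symm)
      (fun n h1 h2 => (hgint n h1 h2).neg)
      ?_
    · have l1 : ∫ ω, Gval N (fun k ω => -(Y k ω)) (fun k ω => -(X k ω))
          (fun k ω => -(W k ω)) q ps 1 ω ∂P = -∫ ω, Gval N X Y W ps q 1 ω ∂P := by
        rw [← integral_neg]
        exact integral_congr_ae (Filter.Eventually.of_forall fun ω =>
          Gval_neg N X Y W ps q 1 ω)
      have l2 : ∫ ω, (fun n ω => -(g n ω)) 1 ω ∂P = -∫ ω, g 1 ω ∂P := by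
        simp only []
        exact integral_neg _
      rw [l1, l2] at key
      linarith
    · -- the saddle hypothesis for the reversed game
      intro n h1 h2
      have hcneg : P[fun ω => -(g (n+1) ω) | F n] =ᵐ[P] fun ω => -((P[g (n+1) | F n]) ω) :=
        condExp_neg (g (n+1)) (F n)
      filter_upwards [hcneg] with ω hω
      rw [hω]
      rw [show (-((P[g (n+1) | F n]) ω)) = -((P[g (n+1) | F n]) ω) from rfl]
      rw [phi_neg, phi_neg]
      exact neg_le_neg (hsadR q hq n h1 h2 ω)
  -- assemble
  refine ⟨ps, qs, hpsS, hqsS, fun p q hp hq => ⟨main1 p hp, main2 q hq⟩, ?_⟩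
  -- the game has a value
  haveI hne : Nonempty {p : ℕ → Ω → ℝ // IsRandStrat F N p} :=
    ⟨⟨fun _ _ => 1, ⟨fun n _ _ => ⟨measurable_const, fun ω => ⟨zero_le_one, le_rfl⟩⟩,
      fun ω => rfl⟩⟩⟩
  set B : ℝ := ∫ ω, (∑ n ∈ Finset.Icc 1 N, (|X n ω| + |Y n ω| + |W n ω|)) ∂P with hB
  have hbd : ∀ (p q : {p : ℕ → Ω → ℝ // IsRandStrat F N p}),
      |randPayoff P N X Y W p.1 q.1| ≤ B := fun p q => by
    rw [hRP]
    exact payoff_bound P F N X Y W hadapt hint p.1 q.1 p.2.1 q.2.1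
  have hbddAbove : ∀ q : {p : ℕ → Ω → ℝ // IsRandStrat F N p},
      BddAbove (Set.range fun p : {p : ℕ → Ω → ℝ // IsRandStrat F N p} =>
        randPayoff P N X Y W p.1 q.1) := by
    intro q
    refine ⟨B, ?_⟩
    rintro r ⟨p, rfl⟩
    exact (abs_le.mp (hbd p q)).2
  have hbddBelow : ∀ p : {p : ℕ → Ω → ℝ // IsRandStrat F N p},
      BddBelow (Set.range fun q : {p : ℕ → Ω → ℝ // IsRandStrat F N p} =>
        randPayoff P N X Y W p.1 q.1) := by
    intro p
    refine ⟨-B, ?_⟩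
    rintro r ⟨q, rfl⟩
    exact (abs_le.mp (hbd p q)).1
  have hbddB2 : BddBelow (Set.range fun q : {p : ℕ → Ω → ℝ // IsRandStrat F N p} =>
      ⨆ p : {p : ℕ → Ω → ℝ // IsRandStrat F N p}, randPayoff P N X Y W p.1 q.1) := by
    refine ⟨-B, ?_⟩
    rintro r ⟨q, rfl⟩
    have step1 : (-B : ℝ) ≤ randPayoff P N X Y W ps q.1 :=
      (abs_le.mp (hbd ⟨ps, hpsS⟩ q)).1
    have step2 : randPayoff P N X Y W ps q.1
        ≤ ⨆ p : {p : ℕ → Ω → ℝ // IsRandStrat F N p}, randPayoff P N X Y W p.1 q.1 :=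
      le_ciSup (hbddAbove q) (⟨ps, hpsS⟩ : {p : ℕ → Ω → ℝ // IsRandStrat F N p})
    exact step1.trans step2
  have hbddA2 : BddAbove (Set.range fun p : {p : ℕ → Ω → ℝ // IsRandStrat F N p} =>
      ⨅ q : {p : ℕ → Ω → ℝ // IsRandStrat F N p}, randPayoff P N X Y W p.1 q.1) := by
    refine ⟨B, ?_⟩
    rintro r ⟨p, rfl⟩
    have step1 : (⨅ q : {p : ℕ → Ω → ℝ // IsRandStrat F N p}, randPayoff P N X Y W p.1 q.1)
        ≤ randPayoff P N X Y W p.1 qs :=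
      ciInf_le (hbddBelow p) (⟨qs, hqsS⟩ : {p : ℕ → Ω → ℝ // IsRandStrat F N p})
    have step2 : randPayoff P N X Y W p.1 qs ≤ B := (abs_le.mp (hbd p ⟨qs, hqsS⟩)).2
    exact step1.trans step2
  apply le_antisymm
  · -- sup inf ≤ inf sup
    refine ciSup_le fun p => le_ciInf fun q => ?_
    calc (⨅ q' : {p : ℕ → Ω → ℝ // IsRandStrat F N p}, randPayoff P N X Y W p.1 q'.1)
        ≤ randPayoff P N X Y W p.1 q.1 := ciInf_le (hbddBelow p) q
      _ ≤ ⨆ p' : {p : ℕ → Ω → ℝ // IsRandStrat F N p}, randPayoff P N X Y W p'.1 q.1 :=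
          le_ciSup (hbddAbove q) p
  · -- inf sup ≤ sup inf
    calc (⨅ q : {p : ℕ → Ω → ℝ // IsRandStrat F N p},
          ⨆ p : {p : ℕ → Ω → ℝ // IsRandStrat F N p}, randPayoff P N X Y W p.1 q.1)
        ≤ ⨆ p : {p : ℕ → Ω → ℝ // IsRandStrat F N p},
            randPayoff P N X Y W p.1 qs := ciInf_le hbddB2 ⟨qs, hqsS⟩
      _ ≤ randPayoff P N X Y W ps qs := ciSup_le fun p => main1 p.1 p.2
      _ ≤ ⨅ q : {p : ℕ → Ω → ℝ // IsRandStrat F N p},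
            randPayoff P N X Y W ps q.1 := le_ciInf fun q => main2 q.1 q.2
      _ ≤ ⨆ p : {p : ℕ → Ω → ℝ // IsRandStrat F N p},
            ⨅ q : {p : ℕ → Ω → ℝ // IsRandStrat F N p},
              randPayoff P N X Y W p.1 q.1 := le_ciSup hbddA2 ⟨ps, hpsS⟩

end
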